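/- For K = 1: if F : [0,∞) → [0,∞) satisfies ∑_j q_j F(u_j) ≤ 1 whenever q is a finite probability vector and ∑_j q_j u_j = 1 with u_j ≥ 0, then there exists w ∈ [0,1] such that F(u) ≤ 1 + w(u − 1) for all u ≥ 0. In particular F(u) ≤ max(u, 1) for all u ≥ 0, and F(1) ≤ 1. -/

import Mathlib

open BigOperators

/-- the one-dimensional case. If `∑ q_j F(u_j) ≤ 1` for every
finite probability vector `q` and nonnegative `u` with `∑ q_j u_j = 1`, then
`F(u) ≤ 1 + w (u - 1)` for some `w ∈ [0,1]`; in particular `F(u) ≤ max u 1`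
and `F 1 ≤ 1`. -/
theorem stmt_10 (F : ℝ → ℝ) (hF0 : ∀ u : ℝ, 0 ≤ u → 0 ≤ F u)
    (hcomb : ∀ (n : ℕ), 1 ≤ n → ∀ (q u : Fin n → ℝ),
      (∀ j, 0 ≤ q j) → ∑ j, q j = 1 → (∀ j, 0 ≤ u j) →
      ∑ j, q j * u j = 1 → ∑ j, q j * F (u j) ≤ 1) :
    (∃ w : ℝ, 0 ≤ w ∧ w ≤ 1 ∧ ∀ u : ℝ, 0 ≤ u → F u ≤ 1 + w * (u - 1)) ∧
    (∀ u : ℝ, 0 ≤ u → F u ≤ max u 1) ∧ F 1 ≤ 1 := by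
  -- F 1 ≤ 1 from n = 1
  have hF1 : F 1 ≤ 1 := by
    have := hcomb 1 le_rfl (fun _ => 1) (fun _ => 1)
      (fun _ => zero_le_one) (by simp) (fun _ => zero_le_one) (by simp)
    simpa using this
  -- pairing lemma
  have pair : ∀ a b : ℝ, 0 ≤ a → a < 1 → 1 < b →
      (b - 1) * F a + (1 - a) * F b ≤ b - a := by
    intro a b ha ha1 hb
    have hba : 0 < b - a := by linarith
    have h := hcomb 2 (by norm_num) ![(b-1)/(b-a), (1-a)/(b-a)] ![a, b]
      (by
        intro j
        fin_cases j <;> simp <;>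
          exact div_nonneg (by linarith) (by linarith))
      (by
        rw [Fin.sum_univ_two]
        simp only [Matrix.cons_val_zero, Matrix.cons_val_one, Matrix.head_cons]
        field_simp
        ring)
      (by
        intro j
        fin_cases j <;> simp <;> linarith)
      (by
        rw [Fin.sum_univ_two]
        simp only [Matrix.cons_val_zero, Matrix.cons_val_one, Matrix.head_cons]
        field_simp
        ring)
    rw [Fin.sum_univ_two] at h
    simp only [Matrix.cons_val_zero, Matrix.cons_val_one, Matrix.head_cons] at h
    rw [div_mul_eq_mul_div, div_mul_eq_mul_div, ← add_div,
      div_le_one hba] at h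
    linarith
  -- F b ≤ b for b > 1
  have hFb : ∀ b : ℝ, 1 < b → F b ≤ b := by
    intro b hb
    have h := pair 0 b le_rfl one_pos hb
    have h0 := hF0 0 le_rfl
    nlinarith
  -- F a ≤ 1 for 0 ≤ a < 1
  have hFa1 : ∀ a : ℝ, 0 ≤ a → a < 1 → F a ≤ 1 := by
    intro a ha ha1
    by_contra hcon
    push_neg at hcon
    have hεpos : 0 < F a - 1 := by linarith
    have hqpos : 0 < 2 * (1 - a) / (F a - 1) :=
      div_pos (by linarith) hεpos
    have hb : 1 < 1 + 2 * (1 - a) / (F a - 1) := by linarith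
    have h := pair a _ ha ha1 hb
    have hFbnn := hF0 (1 + 2 * (1 - a) / (F a - 1)) (by linarith)
    have h2 : (2 * (1 - a) / (F a - 1)) * (F a - 1) = 2 * (1 - a) := by
      field_simp
    nlinarith
  -- define w
  set S : Set ℝ := insert 0 {s | ∃ b : ℝ, 1 < b ∧ s = (F b - 1) / (b - 1)} with hS
  have hSne : S.Nonempty := ⟨0, Set.mem_insert 0 _⟩
  have hSbdd : ∀ s ∈ S, s ≤ 1 := by
    intro s hs
    rcases hs with rfl | ⟨b, hb, rfl⟩
    · exact zero_le_one
    · rw [div_le_one (by linarith)]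
      have := hFb b hb
      linarith
  set w : ℝ := sSup S with hw
  have hw0 : 0 ≤ w := le_csSup ⟨1, fun s hs => hSbdd s hs⟩ (Set.mem_insert 0 _)
  have hw1 : w ≤ 1 := Real.sSup_le hSbdd zero_le_one
  have hmain : ∀ u : ℝ, 0 ≤ u → F u ≤ 1 + w * (u - 1) := by
    intro u hu
    rcases lt_trichotomy u 1 with h | h | h
    · -- u < 1 : show w ≤ (1 - F u)/(1 - u)
      have hFu1 := hFa1 u hu h
      have h1u : 0 < 1 - u := by linarith
      have hwle : w ≤ (1 - F u) / (1 - u) := by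
        apply Real.sSup_le _ (div_nonneg (by linarith) h1u.le)
        intro s hs
        rcases hs with rfl | ⟨b, hb, rfl⟩
        · exact div_nonneg (by linarith) h1u.le
        · rw [div_le_div_iff₀ (by linarith) h1u]
          have hp := pair u b hu h hb
          nlinarith
      rw [le_div_iff₀ h1u] at hwle
      nlinarith
    · subst h; simpa using hF1
    · have hmem : (F u - 1) / (u - 1) ∈ S :=
        Set.mem_insert_of_mem _ ⟨u, h, rfl⟩
      have := le_csSup ⟨1, fun s hs => hSbdd s hs⟩ hmem
      rw [div_le_iff₀ (by linarith)] at this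
      linarith
  refine ⟨⟨w, hw0, hw1, hmain⟩, ?_, hF1⟩
  intro u hu
  have := hmain u hu
  rcases le_total u 1 with h | h
  · have : F u ≤ 1 := by nlinarith
    exact this.trans (le_max_right _ _)
  · have : F u ≤ u := by nlinarith
    exact this.trans (le_max_left _ _)
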